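/- In the translation-invariant setting, for any a, b ∈ ℳ define η̃_t := φ⁻¹(a) + t[φ⁻¹(b) − φ⁻¹(a)] for t ∈ [0,1] (well-defined since 𝒵 is convex) and γ̃_t := φ(η̃_t). Then γ̃ is a path in ℳ with end-points a, b and l(γ̃) = ⟨φ⁻¹(b) − φ⁻¹(a), M (φ⁻¹(b) − φ⁻¹(a))⟩^{1/2}. -/

import Mathlib

open Set
open scoped ENNReal BigOperators

noncomputable section

/-- The real Hilbert space ℓ² of square-summable real sequences. -/
abbrev l2 : Type := lp (fun _ : ℕ => ℝ) 2

/-- A partition `0 = t₀ ≤ t₁ ≤ … ≤ t_n = 1` of `[0,1]`. -/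
structure PathPartition where
  n : ℕ
  t : ℕ → ℝ
  first : t 0 = 0
  last : t n = 1
  mono : ∀ k, k < n → t k ≤ t (k + 1)

/-- The set of points of a partition. -/
def PathPartition.points (P : PathPartition) : Set ℝ := {x | ∃ k ≤ P.n, P.t k = x}

/-- `χ(γ, 𝒫) = ∑ₖ ‖γ_{t_k} − γ_{t_{k−1}}‖`. -/
def chiSum {E : Type*} [NormedAddCommGroup E] (γ : ℝ → E) (P : PathPartition) : ℝ :=
  ∑ k ∈ Finset.range P.n, ‖γ (P.t (k + 1)) - γ (P.t k)‖

/-- The length of a path: the supremum over all partitions of `χ(γ, 𝒫)`. -/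
def pathLength {E : Type*} [NormedAddCommGroup E] (γ : ℝ → E) : ℝ≥0∞ :=
  ⨆ P : PathPartition, ENNReal.ofReal (chiSum γ P)

/-- A path in `S` with end-points `a, b`: a continuous map `γ : [0,1] → S`
with `γ 0 = a` and `γ 1 = b`. -/
def IsPathIn {E : Type*} [NormedAddCommGroup E] (S : Set E) (a b : E) (γ : ℝ → E) : Prop :=
  ContinuousOn γ (Icc 0 1) ∧ (∀ t ∈ Icc (0:ℝ) 1, γ t ∈ S) ∧ γ 0 = a ∧ γ 1 = b

/-- Geodesic distance in `S`: the infimum of path-lengths over paths in `S` joining `a, b`. -/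
def geodesicDist {E : Type*} [NormedAddCommGroup E] (S : Set E) (a b : E) : ℝ≥0∞ :=
  ⨅ γ : {γ : ℝ → E // IsPathIn S a b γ}, pathLength γ.val

/-- The quadratic form `⟨v, H v⟩ = ∑ᵢⱼ vᵢ Hᵢⱼ vⱼ`. -/
def quadForm {d : ℕ} (H : Matrix (Fin d) (Fin d) ℝ) (v : EuclideanSpace ℝ (Fin d)) : ℝ :=
  ∑ i, ∑ j, v i * H i j * v j

/-- The matrix `M = −Hess g(0)`, with entries `M_{ij} = −∂²g/∂u^{(i)}∂u^{(j)}` at the origin. -/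
def negHess {d : ℕ} (g : EuclideanSpace ℝ (Fin d) → ℝ) : Matrix (Fin d) (Fin d) ℝ :=
  fun i j => -(deriv (fun s : ℝ => deriv (fun r : ℝ =>
    g (r • EuclideanSpace.single i (1:ℝ) + s • EuclideanSpace.single j (1:ℝ))) 0) 0)

lemma PathPartition.t_le (P : PathPartition) (k m : ℕ) (hkm : k ≤ m) (hmn : m ≤ P.n) :
    P.t k ≤ P.t m := by
  induction m with
  | zero =>
    have hk0 : k = 0 := Nat.le_zero.1 hkm
    rw [hk0]
  | succ m ih =>
    rcases Nat.lt_or_ge k (m+1) with hlt | hge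
    · exact le_trans (ih (Nat.lt_succ_iff.1 hlt) (le_trans (Nat.le_succ m) hmn))
        (P.mono m (Nat.lt_of_succ_le hmn))
    · have hk : k = m + 1 := le_antisymm hkm hge
      rw [hk]

lemma PathPartition.t_mem (P : PathPartition) (k : ℕ) (hk : k ≤ P.n) : P.t k ∈ Icc (0:ℝ) 1 := by
  constructor
  · rw [← P.first]; exact P.t_le 0 k (Nat.zero_le k) hk
  · rw [← P.last]; exact P.t_le k P.n hk le_rfl

section Aux
open Filter

lemma even_deriv_zero' {h : ℝ → ℝ}
    (he : ∀ t ∈ Icc (-1:ℝ) 1, h t = h (-t)) : deriv h 0 = 0 := by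
  have hmem : Ioo (-1:ℝ) 1 ∈ nhds (0:ℝ) := Ioo_mem_nhds (by norm_num) (by norm_num)
  have heq : (fun t => h (-t)) =ᶠ[nhds (0:ℝ)] h := by
    filter_upwards [hmem] with t ht
    exact (he t (Ioo_subset_Icc_self ht)).symm
  have h1 : deriv (fun t => h (-t)) 0 = deriv h 0 := heq.deriv_eq
  have h2 : deriv (fun t => h (-t)) 0 = -deriv h (-0) := deriv_comp_neg h 0
  rw [h2, neg_zero] at h1
  linarith

lemma deriv2_limit {h : ℝ → ℝ} (hC : ContDiff ℝ 2 h) (h0 : deriv h 0 = 0) :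
    Tendsto (fun δ => 2 * (h 0 - h δ) / δ ^ 2) (nhdsWithin 0 (Ioi 0))
      (nhds (-(deriv (deriv h) 0))) := by
  set c := deriv (deriv h) 0 with hc
  have hdiff : Differentiable ℝ h := hC.differentiable (by norm_num)
  have hd1 : ContDiff ℝ 1 (deriv h) := (hC.iterate_deriv' 1 1 : _)
  have hD : HasDerivAt (deriv h) c 0 := ((hd1.differentiable (by norm_num)) 0).hasDerivAt
  have o1 : (fun t => deriv h t - t * c) =o[nhds (0:ℝ)] (fun t => t) := by
    have := (hasDerivAt_iff_isLittleO.1 hD)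
    simpa [h0, smul_eq_mul, mul_comm] using this
  have key : (fun δ => h δ - h 0 - c / 2 * δ ^ 2) =o[nhdsWithin (0:ℝ) (Ioi 0)]
      (fun δ => δ ^ 2) := by
    rw [Asymptotics.isLittleO_iff]
    intro ε hε
    have := (Asymptotics.isLittleO_iff.1 o1) hε
    rw [Metric.eventually_nhds_iff] at this
    obtain ⟨r, hr, hball⟩ := this
    have hIoo : Ioo (0:ℝ) r ∈ nhdsWithin (0:ℝ) (Ioi 0) :=
      Ioo_mem_nhdsGT_of_mem (by constructor <;> simp [hr, le_refl])
    filter_upwards [hIoo] with δ hδ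
    obtain ⟨hδ0, hδr⟩ := hδ
    have hint : IntervalIntegrable (deriv h) MeasureTheory.volume 0 δ :=
      (hd1.continuous).intervalIntegrable 0 δ
    have hftc : ∫ t in (0:ℝ)..δ, deriv h t = h δ - h 0 :=
      intervalIntegral.integral_deriv_eq_sub (fun x _ => hdiff x) hint
    have hid : ∫ t in (0:ℝ)..δ, t * c = c / 2 * δ ^ 2 := by
      rw [intervalIntegral.integral_mul_const, integral_id]
      ring
    have hsub : h δ - h 0 - c / 2 * δ ^ 2 = ∫ t in (0:ℝ)..δ, (deriv h t - t * c) := by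
      rw [intervalIntegral.integral_sub hint
        (((by continuity : Continuous fun t : ℝ => t * c)).intervalIntegrable 0 δ), hftc, hid]
    rw [hsub]
    have hb : ∀ t ∈ uIoc (0:ℝ) δ, ‖deriv h t - t * c‖ ≤ ε * δ := by
      intro t ht
      rw [uIoc_of_le hδ0.le] at ht
      have h1 : dist t 0 < r := by
        rw [Real.dist_eq, sub_zero, abs_of_pos ht.1]; linarith [ht.2]
      have := hball h1
      calc ‖deriv h t - t * c‖ ≤ ε * ‖t‖ := this
        _ ≤ ε * δ := by
            rw [Real.norm_eq_abs, abs_of_pos ht.1]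
            exact mul_le_mul_of_nonneg_left ht.2 hε.le
    calc ‖∫ t in (0:ℝ)..δ, (deriv h t - t * c)‖ ≤ ε * δ * |δ - 0| :=
          intervalIntegral.norm_integral_le_of_norm_le_const hb
      _ = ε * ‖δ ^ 2‖ := by
          rw [sub_zero, abs_of_pos hδ0, Real.norm_eq_abs]
          rw [abs_of_pos (by positivity : (0:ℝ) < δ ^ 2)]; ring
  have T0 : Tendsto (fun δ => (h δ - h 0 - c / 2 * δ ^ 2) / δ ^ 2)
      (nhdsWithin (0:ℝ) (Ioi 0)) (nhds 0) := key.tendsto_div_nhds_zero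
  have T1 : Tendsto (fun δ => -2 * ((h δ - h 0 - c / 2 * δ ^ 2) / δ ^ 2) - c)
      (nhdsWithin (0:ℝ) (Ioi 0)) (nhds (-c)) := by
    have := (T0.const_mul (-2)).sub_const c
    simpa using this
  refine T1.congr' ?_
  filter_upwards [self_mem_nhdsWithin] with δ (hδ : δ ∈ Ioi (0:ℝ))
  have hδ0 : δ ≠ 0 := ne_of_gt hδ
  field_simp
  ring

variable {E : Type*} [NormedAddCommGroup E] [NormedSpace ℝ E]

lemma line_hasDerivAt {g : E → ℝ} (hg : Differentiable ℝ g) (x0 w : E) (t : ℝ) :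
    HasDerivAt (fun r : ℝ => g (x0 + r • w)) (fderiv ℝ g (x0 + t • w) w) t := by
  have h1 : HasDerivAt (fun r : ℝ => x0 + r • w) w t := by
    simpa using ((hasDerivAt_id t).smul_const w).const_add x0
  exact (hg (x0 + t • w)).hasFDerivAt.comp_hasDerivAt t h1

lemma line_hasDerivAt2 {g : E → ℝ} (hg : ContDiff ℝ 2 g) (x0 w u : E) :
    HasDerivAt (fun s : ℝ => fderiv ℝ g (x0 + s • w) u)
      (fderiv ℝ (fderiv ℝ g) x0 w u) 0 := by
  have h1 : HasDerivAt (fun r : ℝ => x0 + r • w) w 0 := by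
    simpa using ((hasDerivAt_id (0:ℝ)).smul_const w).const_add x0
  have hd : Differentiable ℝ (fderiv ℝ g) :=
    (hg.fderiv_right (by norm_num : (1:WithTop ℕ∞) + 1 ≤ 2)).differentiable (by norm_num)
  have h2 : HasDerivAt (fun s : ℝ => fderiv ℝ g (x0 + s • w))
      (fderiv ℝ (fderiv ℝ g) x0 w) 0 := by
    have := (hd (x0 + (0:ℝ) • w)).hasFDerivAt.comp_hasDerivAt 0 h1
    simpa [Function.comp_def] using this
  have := h2.clm_apply (hasDerivAt_const (0:ℝ) u)
  simpa using this

lemma deriv2_line {g : E → ℝ} (hg : ContDiff ℝ 2 g) (v : E) :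
    deriv (deriv (fun t : ℝ => g (t • v))) 0 = fderiv ℝ (fderiv ℝ g) 0 v v := by
  have hdiff : Differentiable ℝ g := hg.differentiable (by norm_num)
  have hder : deriv (fun t : ℝ => g (t • v)) = fun t => fderiv ℝ g (t • v) v := by
    funext t
    have := line_hasDerivAt hdiff 0 v t
    simpa using this.deriv
  rw [hder]
  have := line_hasDerivAt2 hg 0 v v
  simp only [zero_add] at this
  exact this.deriv

lemma negHess_eq {d : ℕ} {g : EuclideanSpace ℝ (Fin d) → ℝ} (hg : ContDiff ℝ 2 g)
    (i j : Fin d) :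
    negHess g i j = -(fderiv ℝ (fderiv ℝ g) 0 (EuclideanSpace.single j (1:ℝ))
      (EuclideanSpace.single i (1:ℝ))) := by
  have hdiff : Differentiable ℝ g := hg.differentiable (by norm_num)
  set ei := EuclideanSpace.single i (1:ℝ)
  set ej := EuclideanSpace.single j (1:ℝ)
  have hinner : (fun s : ℝ => deriv (fun r : ℝ => g (r • ei + s • ej)) 0)
      = fun s : ℝ => fderiv ℝ g (s • ej) ei := by
    funext s
    have h0 : (fun r : ℝ => g (r • ei + s • ej)) = fun r : ℝ => g ((s • ej) + r • ei) := by
      funext r; rw [add_comm]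
    rw [h0]
    have := line_hasDerivAt hdiff (s • ej) ei 0
    simpa using this.deriv
  rw [negHess, hinner]
  have := line_hasDerivAt2 hg 0 ej ei
  simp only [zero_add] at this
  rw [this.deriv]

lemma clm_expand {d : ℕ} (v : EuclideanSpace ℝ (Fin d))
    (L : EuclideanSpace ℝ (Fin d) →L[ℝ] ℝ) :
    L v = ∑ i, v i * L (EuclideanSpace.single i (1:ℝ)) := by
  have hvsum : (∑ i, v i • EuclideanSpace.single i (1:ℝ)) = v := by
    ext j
    have : (∑ i, v i • EuclideanSpace.single i (1:ℝ)) j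
        = ∑ i, (v i • EuclideanSpace.single i (1:ℝ)) j :=
      by rw [WithLp.ofLp_sum, Finset.sum_apply]
    rw [this]
    simp [EuclideanSpace.single_apply]
  conv_lhs => rw [← hvsum]
  rw [map_sum]
  simp [smul_eq_mul]

lemma quadForm_negHess {d : ℕ} {g : EuclideanSpace ℝ (Fin d) → ℝ} (hg : ContDiff ℝ 2 g)
    (v : EuclideanSpace ℝ (Fin d)) :
    quadForm (negHess g) v = -(fderiv ℝ (fderiv ℝ g) 0 v v) := by
  set f2 := fderiv ℝ (fderiv ℝ g) 0 with hf2
  have hexp : f2 v v = ∑ i, v i * ∑ j, v j * f2 (EuclideanSpace.single j (1:ℝ))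
      (EuclideanSpace.single i (1:ℝ)) := by
    rw [clm_expand v (f2 v)]
    refine Finset.sum_congr rfl fun i _ => ?_
    congr 1
    have : f2 v (EuclideanSpace.single i (1:ℝ))
        = f2.flip (EuclideanSpace.single i (1:ℝ)) v := rfl
    rw [this, clm_expand v (f2.flip (EuclideanSpace.single i (1:ℝ)))]
    rfl
  rw [quadForm, hexp, ← Finset.sum_neg_distrib]
  refine Finset.sum_congr rfl fun i _ => ?_
  rw [Finset.mul_sum, ← Finset.sum_neg_distrib]
  refine Finset.sum_congr rfl fun j _ => ?_
  rw [negHess_eq hg]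
  ring

end Aux

open Filter

/-- Translation-invariant kernels: the image under `φ` of the straight
line `η̃_t = φ⁻¹(a) + t(φ⁻¹(b) − φ⁻¹(a))` is a path `γ̃` in `ℳ` with end-points `a, b`,
of length `⟨φ⁻¹(b) − φ⁻¹(a), M(φ⁻¹(b) − φ⁻¹(a))⟩^{1/2}`. -/
theorem translation_invariant_straight_line_length
    {d : ℕ} (hd : 1 ≤ d)
    (Z : Set (EuclideanSpace ℝ (Fin d))) (hZ : IsCompact Z) (hZconv : Convex ℝ Z)
    (g : EuclideanSpace ℝ (Fin d) → ℝ) (hg : ContDiff ℝ 2 g)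
    (hM : (negHess g).PosDef)
    (φ : EuclideanSpace ℝ (Fin d) → l2)
    (hφ : ∀ x ∈ Z, ∀ y ∈ Z, (inner ℝ (φ x) (φ y) : ℝ) = g (x - y))
    -- Assumption 1
    (hA1 : ∀ x ∈ Z, ∀ y ∈ Z, x ≠ y → ∃ a ∈ Z, g (x - a) ≠ g (y - a))
    -- φ⁻¹ : the inverse of φ on ℳ
    (φinv : l2 → EuclideanSpace ℝ (Fin d)) (hφinv : ∀ x ∈ Z, φinv (φ x) = x)
    (a b : l2) (ha : a ∈ φ '' Z) (hb : b ∈ φ '' Z) :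
    IsPathIn (φ '' Z) a b (fun t => φ (φinv a + t • (φinv b - φinv a))) ∧
      pathLength (fun t => φ (φinv a + t • (φinv b - φinv a))) =
        ENNReal.ofReal (Real.sqrt (quadForm (negHess g) (φinv b - φinv a))) := by
  classical
  obtain ⟨xa, hxa, hxaeq⟩ := ha
  obtain ⟨xb, hxb, hxbeq⟩ := hb
  have hpa : φinv a = xa := by rw [← hxaeq]; exact hφinv xa hxa
  have hqb : φinv b = xb := by rw [← hxbeq]; exact hφinv xb hxb
  set p : EuclideanSpace ℝ (Fin d) := φinv a with hp_def
  set q : EuclideanSpace ℝ (Fin d) := φinv b with hq_def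
  set v : EuclideanSpace ℝ (Fin d) := q - p with hv_def
  set γ : ℝ → l2 := fun t => φ (p + t • v) with hγ_def
  have hp : p ∈ Z := by show p ∈ Z; rw [hpa]; exact hxa
  have hq : q ∈ Z := by show q ∈ Z; rw [hqb]; exact hxb
  have hmemZ : ∀ t ∈ Icc (0:ℝ) 1, p + t • v ∈ Z := by
    intro t ht
    have h1 : (1 - t) • p + t • q ∈ Z :=
      hZconv hp hq (by linarith [ht.2]) ht.1 (by ring)
    have h2 : p + t • v = (1 - t) • p + t • q := by
      rw [hv_def, smul_sub, sub_smul, one_smul]; abel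
    rw [h2]; exact h1
  set h : ℝ → ℝ := fun t => g (t • v) with hh_def
  have hh0 : h 0 = g 0 := by simp [hh_def]
  -- norm formula
  have hnorm : ∀ s ∈ Icc (0:ℝ) 1, ∀ t ∈ Icc (0:ℝ) 1,
      ‖γ s - γ t‖ ^ 2 = 2 * (g 0 - h (s - t)) := by
    intro s hs t ht
    have hxs := hmemZ s hs
    have hxt := hmemZ t ht
    have e1 : ‖γ s‖ ^ 2 = g 0 := by
      rw [← real_inner_self_eq_norm_sq, hγ_def]
      simp only
      rw [hφ _ hxs _ hxs, sub_self]
    have e2 : ‖γ t‖ ^ 2 = g 0 := by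
      rw [← real_inner_self_eq_norm_sq, hγ_def]
      simp only
      rw [hφ _ hxt _ hxt, sub_self]
    have e3 : (inner ℝ (γ s) (γ t) : ℝ) = h (s - t) := by
      rw [hγ_def]
      simp only
      rw [hφ _ hxs _ hxt, hh_def]
      congr 1
      rw [add_sub_add_left_eq_sub, ← sub_smul]
    rw [norm_sub_sq_real, e1, e2, e3]
    ring
  set G : ℝ → ℝ := fun u => Real.sqrt (2 * (g 0 - h u)) with hG_def
  have hGnorm : ∀ s ∈ Icc (0:ℝ) 1, ∀ t ∈ Icc (0:ℝ) 1, ‖γ s - γ t‖ = G (s - t) := by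
    intro s hs t ht
    rw [hG_def]
    simp only
    rw [← hnorm s hs t ht, Real.sqrt_sq (norm_nonneg _)]
  have hpos : ∀ u ∈ Icc (0:ℝ) 1, 0 ≤ 2 * (g 0 - h u) := by
    intro u hu
    have := hnorm u hu 0 (by constructor <;> norm_num)
    rw [sub_zero] at this
    rw [← this]
    positivity
  -- evenness of h
  have heven : ∀ u ∈ Icc (-1:ℝ) 1, h u = h (-u) := by
    have key : ∀ u ∈ Icc (0:ℝ) 1, h u = h (-u) := by
      intro u hu
      have hxu : p + u • v ∈ Z := hmemZ u hu
      have e1 : h u = g ((p + u • v) - p) := by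
        show g (u • v) = g ((p + u • v) - p)
        congr 1
        abel
      have e2 : h (-u) = g (p - (p + u • v)) := by
        show g ((-u) • v) = g (p - (p + u • v))
        congr 1
        rw [neg_smul]
        abel
      rw [e1, e2, ← hφ _ hxu _ hp, ← hφ _ hp _ hxu, real_inner_comm]
    intro u hu
    rcases le_total 0 u with h0u | hu0
    · exact key u ⟨h0u, hu.2⟩
    · have := key (-u) ⟨by linarith, by linarith [hu.1]⟩
      rw [neg_neg] at this
      exact this.symm
  have hhC : ContDiff ℝ 2 h := hg.comp (contDiff_id.smul contDiff_const)
  have hd0 : deriv h 0 = 0 := even_deriv_zero' heven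
  set Q : ℝ := quadForm (negHess g) v with hQ_def
  have hQeq : -(deriv (deriv h) 0) = Q := by
    rw [hh_def, deriv2_line hg v, hQ_def, quadForm_negHess hg v]
  -- the main limit
  have TT : Tendsto (fun δ => 2 * (h 0 - h δ) / δ ^ 2) (nhdsWithin 0 (Ioi 0)) (nhds Q) := by
    have := deriv2_limit hhC hd0
    rwa [hQeq] at this
  have TG : Tendsto (fun u => G u / u) (nhdsWithin 0 (Ioi 0)) (nhds (Real.sqrt Q)) := by
    have T2 : Tendsto (fun u => Real.sqrt (2 * (h 0 - h u) / u ^ 2))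
        (nhdsWithin 0 (Ioi 0)) (nhds (Real.sqrt Q)) :=
      (Real.continuous_sqrt.continuousAt.tendsto).comp TT
    refine T2.congr' ?_
    have hIoc : Ioc (0:ℝ) 1 ∈ nhdsWithin (0:ℝ) (Ioi 0) :=
      Ioc_mem_nhdsGT_of_mem (by constructor <;> norm_num)
    filter_upwards [hIoc] with u hu
    have hu0 : 0 < u := hu.1
    show Real.sqrt (2 * (h 0 - h u) / u ^ 2) = G u / u
    rw [hh0, Real.sqrt_div (hpos u ⟨hu0.le, hu.2⟩) (u ^ 2), Real.sqrt_sq hu0.le]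
  -- limit of uniform subdivisions
  have hlim : ∀ δ : ℝ, 0 < δ →
      Tendsto (fun n : ℕ => ((n:ℝ) + 1) * G (δ / ((n:ℝ) + 1))) atTop
        (nhds (Real.sqrt Q * δ)) := by
    intro δ hδ
    have hu : Tendsto (fun n : ℕ => δ / ((n:ℝ) + 1)) atTop (nhds 0) :=
      Tendsto.div_atTop tendsto_const_nhds
        (tendsto_atTop_add_const_right atTop 1 tendsto_natCast_atTop_atTop)
    have hu' : Tendsto (fun n : ℕ => δ / ((n:ℝ) + 1)) atTop (nhdsWithin 0 (Ioi 0)) :=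
      tendsto_nhdsWithin_of_tendsto_nhds_of_eventually_within _ hu
        (Eventually.of_forall fun n => div_pos hδ (by positivity))
    have T3 : Tendsto (fun n : ℕ => δ * (G (δ / ((n:ℝ) + 1)) / (δ / ((n:ℝ) + 1))))
        atTop (nhds (δ * Real.sqrt Q)) := (TG.comp hu').const_mul δ
    rw [mul_comm (Real.sqrt Q) δ]
    refine T3.congr fun n => ?_
    have hm : ((n:ℝ) + 1) ≠ 0 := by positivity
    field_simp
  -- upper bound on G
  have hA : ∀ δ ∈ Icc (0:ℝ) 1, G δ ≤ Real.sqrt Q * δ := by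
    intro δ hδ
    rcases eq_or_lt_of_le hδ.1 with h0 | h0
    · rw [← h0]
      rw [hG_def]
      simp only
      rw [hh0, sub_self, mul_zero, Real.sqrt_zero, mul_zero]
    · have hsub : ∀ n : ℕ, G δ ≤ ((n:ℝ) + 1) * G (δ / ((n:ℝ) + 1)) := by
        intro n
        set m : ℕ := n + 1 with hm_def
        have hmpos : (0:ℝ) < m := by positivity
        set u : ℝ := δ / m with hu_def
        have hu0 : 0 < u := div_pos h0 hmpos
        have hmem : ∀ k : ℕ, k ≤ m → ((k:ℝ) * u) ∈ Icc (0:ℝ) 1 := by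
          intro k hk
          constructor
          · positivity
          · have : (k:ℝ) * u ≤ (m:ℝ) * u := by
              apply mul_le_mul_of_nonneg_right _ hu0.le
              exact_mod_cast hk
            rw [hu_def] at this
            rw [mul_div_cancel₀ δ (ne_of_gt hmpos)] at this
            calc (k:ℝ) * u ≤ δ := this
              _ ≤ 1 := hδ.2
        have htel : γ δ - γ 0 = ∑ k ∈ Finset.range m, (γ (((k:ℝ)+1) * u) - γ ((k:ℝ) * u)) := by
          have := Finset.sum_range_sub (fun k : ℕ => γ ((k:ℝ) * u)) m
          simp only [Nat.cast_add, Nat.cast_one] at this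
          rw [this]
          congr 1
          · rw [hu_def, mul_div_cancel₀ δ (ne_of_gt hmpos)]
          · rw [Nat.cast_zero, zero_mul]
        have hδI : δ ∈ Icc (0:ℝ) 1 := hδ
        have h0I : (0:ℝ) ∈ Icc (0:ℝ) 1 := by constructor <;> norm_num
        have e0 : G δ = ‖γ δ - γ 0‖ := by
          rw [hGnorm δ hδI 0 h0I, sub_zero]
        rw [e0, htel]
        calc ‖∑ k ∈ Finset.range m, (γ (((k:ℝ)+1) * u) - γ ((k:ℝ) * u))‖
            ≤ ∑ k ∈ Finset.range m, ‖γ (((k:ℝ)+1) * u) - γ ((k:ℝ) * u)‖ := norm_sum_le _ _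
          _ = ∑ k ∈ Finset.range m, G u := by
              refine Finset.sum_congr rfl fun k hk => ?_
              have hk' : k < m := Finset.mem_range.1 hk
              have hk1 : ((k:ℝ)+1) * u ∈ Icc (0:ℝ) 1 := by
                have := hmem (k+1) hk'
                push_cast at this
                exact this
              have hk2 : ((k:ℝ)) * u ∈ Icc (0:ℝ) 1 := hmem k hk'.le
              rw [hGnorm _ hk1 _ hk2]
              congr 1
              ring
          _ = ((n:ℝ) + 1) * G u := by
              rw [Finset.sum_const, Finset.card_range]
              rw [nsmul_eq_mul, hm_def]
              push_cast
              ring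
          _ = ((n:ℝ) + 1) * G (δ / ((n:ℝ) + 1)) := by
              congr 2
              rw [hu_def, hm_def]
              push_cast
              ring
      exact ge_of_tendsto (hlim δ h0) (Eventually.of_forall hsub)
  have hPmem : ∀ P : PathPartition, ∀ k ≤ P.n, P.t k ∈ Icc (0:ℝ) 1 := fun P k hk =>
    PathPartition.t_mem P k hk
  -- chiSum upper bound
  have hchi : ∀ P : PathPartition, chiSum γ P ≤ Real.sqrt Q := by
    intro P
    have htel : ∑ k ∈ Finset.range P.n, (P.t (k+1) - P.t k) = 1 := by
      rw [Finset.sum_range_sub (fun k => P.t k) P.n, P.first, P.last, sub_zero]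
    calc chiSum γ P = ∑ k ∈ Finset.range P.n, ‖γ (P.t (k+1)) - γ (P.t k)‖ := rfl
      _ ≤ ∑ k ∈ Finset.range P.n, Real.sqrt Q * (P.t (k+1) - P.t k) := by
          refine Finset.sum_le_sum fun k hk => ?_
          have hk' : k < P.n := Finset.mem_range.1 hk
          have hm1 : P.t (k+1) ∈ Icc (0:ℝ) 1 := hPmem P (k+1) hk'
          have hm2 : P.t k ∈ Icc (0:ℝ) 1 := hPmem P k hk'.le
          rw [hGnorm _ hm1 _ hm2]
          apply hA
          constructor
          · linarith [P.mono k hk']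
          · linarith [hm1.2, hm2.1]
      _ = Real.sqrt Q := by
          rw [← Finset.mul_sum, htel, mul_one]
  -- uniform partitions
  have hunif : ∀ n : ℕ, ∃ P : PathPartition, chiSum γ P = ((n:ℝ)+1) * G (1/((n:ℝ)+1)) := by
    intro n
    have hm0 : (0:ℝ) < (n:ℝ) + 1 := by positivity
    refine ⟨⟨n+1, fun k => (k:ℝ)/((n:ℝ)+1), by simp, by push_cast; field_simp, ?_⟩, ?_⟩
    · intro k hk
      show (k:ℝ)/((n:ℝ)+1) ≤ ((k+1:ℕ):ℝ)/((n:ℝ)+1)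
      gcongr
      exact_mod_cast Nat.le_succ k
    · have hmm : ∀ j : ℕ, j ≤ n+1 → ((j:ℝ)/((n:ℝ)+1)) ∈ Icc (0:ℝ) 1 := by
        intro j hj
        constructor
        · positivity
        · rw [div_le_one hm0]
          have : ((j:ℕ):ℝ) ≤ ((n+1:ℕ):ℝ) := Nat.cast_le.2 hj
          push_cast at this
          linarith
      have hterm : ∀ k ∈ Finset.range (n+1),
          ‖γ (((k+1:ℕ):ℝ)/((n:ℝ)+1)) - γ (((k:ℕ):ℝ)/((n:ℝ)+1))‖ = G (1/((n:ℝ)+1)) := by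
        intro k hk
        have hk' : k < n+1 := Finset.mem_range.1 hk
        have h1 := hmm (k+1) hk'
        have h2 := hmm k hk'.le
        rw [hGnorm _ h1 _ h2]
        congr 1
        rw [div_sub_div_same]
        congr 1
        push_cast
        ring
      rw [chiSum]
      rw [Finset.sum_congr rfl hterm, Finset.sum_const, Finset.card_range, nsmul_eq_mul]
      push_cast
      ring
  -- length equality
  have hlen : pathLength γ = ENNReal.ofReal (Real.sqrt Q) := by
    apply le_antisymm
    · exact iSup_le fun P => ENNReal.ofReal_le_ofReal (hchi P)
    · have hs : Tendsto (fun n : ℕ => ((n:ℝ)+1) * G (1/((n:ℝ)+1))) atTop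
          (nhds (Real.sqrt Q)) := by
        have := hlim 1 one_pos
        simpa using this
      have hs2 : Tendsto (fun n : ℕ => ENNReal.ofReal (((n:ℝ)+1) * G (1/((n:ℝ)+1))))
          atTop (nhds (ENNReal.ofReal (Real.sqrt Q))) :=
        (ENNReal.continuous_ofReal.tendsto _).comp hs
      refine le_of_tendsto' hs2 fun n => ?_
      obtain ⟨P, hP⟩ := hunif n
      rw [← hP]
      exact le_iSup (fun P => ENNReal.ofReal (chiSum γ P)) P
  -- assemble
  refine ⟨⟨?_, ?_, ?_, ?_⟩, hlen⟩
  · -- continuity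
    have hlip : LipschitzOnWith (Real.toNNReal (Real.sqrt Q)) γ (Icc (0:ℝ) 1) := by
      apply LipschitzOnWith.of_dist_le_mul
      intro s hs t ht
      have hcoe : ((Real.toNNReal (Real.sqrt Q) : NNReal) : ℝ) = Real.sqrt Q :=
        Real.coe_toNNReal _ (Real.sqrt_nonneg _)
      rcases le_total t s with hts | hst
      · calc dist (γ s) (γ t) = G (s - t) := by rw [dist_eq_norm, hGnorm s hs t ht]
          _ ≤ Real.sqrt Q * (s - t) := hA _ ⟨by linarith, by linarith [hs.2, ht.1]⟩
          _ = (Real.toNNReal (Real.sqrt Q) : ℝ) * dist s t := by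
              rw [hcoe, Real.dist_eq, abs_of_nonneg (by linarith)]
      · calc dist (γ s) (γ t) = G (t - s) := by
              rw [dist_comm, dist_eq_norm, hGnorm t ht s hs]
          _ ≤ Real.sqrt Q * (t - s) := hA _ ⟨by linarith, by linarith [ht.2, hs.1]⟩
          _ = (Real.toNNReal (Real.sqrt Q) : ℝ) * dist s t := by
              rw [hcoe, dist_comm, Real.dist_eq, abs_of_nonneg (by linarith)]
    exact hlip.continuousOn
  · intro t ht
    exact mem_image_of_mem φ (hmemZ t ht)
  · show φ (p + (0:ℝ) • v) = a
    rw [zero_smul, add_zero, hpa, hxaeq]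
  · show φ (p + (1:ℝ) • v) = b
    have : p + (1:ℝ) • v = q := by rw [one_smul, hv_def]; abel
    rw [this, hqb, hxbeq]
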